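/- Let G=(V,E) be a directed unweighted graph with hop diameter D_H (the maximum number of edges over all pairwise shortest paths between connected pairs). In the hop-doubling labeling algorithm with exhaustive pruning, no new label entries are generated after iteration 2⌈log₂ D_H⌉; i.e., the number of iterations is at most 2⌈log₂ D_H⌉. -/

import Mathlib

def IsPath {V : Type*} (E : V → V → Prop) (p : List V) (u v : V) : Prop :=
  List.Chain' E p ∧ p.head? = some u ∧ p.getLast? = some v

def IsShortestPath {V : Type*} (E : V → V → Prop) (p : List V) (u v : V) : Prop :=
  IsPath E p u v ∧ ∀ q : List V, IsPath E q u v → p.length ≤ q.length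

def Trough {V : Type*} (r : V → ℕ) (p : List V) (u v : V) : Prop :=
  ∀ x ∈ (p.drop 1).dropLast, r x < max (r u) (r v)

noncomputable def GDist {V : Type*} (E : V → V → Prop) (u v : V) : ℕ∞ :=
  sInf { n : ℕ∞ | ∃ p : List V, IsPath E p u v ∧ n = ((p.length - 1 : ℕ) : ℕ∞) }

lemma gdist_self {V : Type*} (E : V → V → Prop) (u : V) : GDist E u u = 0 := by
  have h0 : (0 : ℕ∞) ∈ { n : ℕ∞ | ∃ p : List V, IsPath E p u u ∧ n = ((p.length - 1 : ℕ) : ℕ∞) } := by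
    refine ⟨[u], ⟨?_, rfl, rfl⟩, by simp⟩
    constructor
  exact le_antisymm (sInf_le h0) zero_le

/-- No new label entries after iteration `2⌈log₂ D_H⌉` in hop-doubling with pruning.
`L k` is the set of label entries (u, v, d) surviving at the end of iteration `k`. -/
theorem stmt6 {V : Type*} (E : V → V → Prop) (r : V → ℕ) (hr : Function.Injective r)
    (L : ℕ → Set (V × V × ℕ)) (DH : ℕ)
    (hDH : ∀ u v : V, GDist E u v ≠ ⊤ → GDist E u v ≤ (DH : ℕ∞))
    (hsound : ∀ (k : ℕ) (u v : V) (d : ℕ), (u, v, d) ∈ L k → GDist E u v ≤ (d : ℕ∞))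
    (hdedup : ∀ (k : ℕ) (u v : V) (d : ℕ), (u, v, d) ∈ L (k + 1) →
      (u, v, d) ∈ L k ∨ ∀ d' : ℕ, (u, v, d') ∈ L k → ¬ d' ≤ d)
    (hprune : ∀ (k : ℕ) (u v : V) (d : ℕ), (u, v, d) ∈ L (k + 1) →
      ¬ ∃ (w : V) (d1 d2 : ℕ), max (r u) (r v) < r w ∧
        (u, w, d1) ∈ L k ∧ (w, v, d2) ∈ L k ∧ d1 + d2 ≤ d)
    (hinv : ∀ k : ℕ, 2 * Nat.clog 2 DH ≤ k → ∀ u v : V, GDist E u v ≠ ⊤ →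
      ∃ (vm : V) (d1 d2 : ℕ), (u, vm, d1) ∈ L k ∧ (vm, v, d2) ∈ L k ∧
        (d1 : ℕ∞) + (d2 : ℕ∞) = GDist E u v ∧
        (d1 : ℕ∞) = GDist E u vm ∧ (d2 : ℕ∞) = GDist E vm v ∧
        ∀ w : V, GDist E u w + GDist E w v = GDist E u v → r w ≤ r vm) :
    ∀ k : ℕ, 2 * Nat.clog 2 DH ≤ k → L (k + 1) ⊆ L k := by
  intro k hk x hx
  obtain ⟨u, v, d⟩ := x
  have hle := hsound (k+1) u v d hx
  have hfin : GDist E u v ≠ ⊤ := fun h => by simp [h] at hle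
  obtain ⟨vm, d1, d2, h1, h2, hsum, hd1, hd2, hmax⟩ := hinv k hk u v hfin
  have hdsum : d1 + d2 ≤ d := by
    have : ((d1 + d2 : ℕ) : ℕ∞) ≤ (d : ℕ∞) := by
      push_cast
      rw [hsum]; exact hle
    exact_mod_cast this
  by_cases hcase : max (r u) (r v) < r vm
  · exact absurd ⟨vm, d1, d2, hcase, h1, h2, hdsum⟩ (hprune k u v d hx)
  · push_neg at hcase
    have hru : r u ≤ r vm := hmax u (by rw [gdist_self]; simp)
    have hrv : r v ≤ r vm := hmax v (by rw [gdist_self]; simp)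
    have heq : r vm = max (r u) (r v) := le_antisymm hcase (max_le hru hrv)
    rcases max_cases (r u) (r v) with ⟨hm, _⟩ | ⟨hm, _⟩
    · -- r vm = r u, so vm = u
      have hvm : vm = u := hr (heq.trans hm)
      subst hvm
      have hd1z : d1 = 0 := by
        have : (d1 : ℕ∞) = 0 := by rw [hd1, gdist_self]
        exact_mod_cast this
      subst hd1z
      rcases hdedup k vm v d hx with h | h
      · exact h
      · exact absurd (by simpa using hdsum) (h d2 h2)
    · have hvm : vm = v := hr (heq.trans hm)
      subst hvm
      have hd2z : d2 = 0 := by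
        have : (d2 : ℕ∞) = 0 := by rw [hd2, gdist_self]
        exact_mod_cast this
      subst hd2z
      rcases hdedup k u vm d hx with h | h
      · exact h
      · exact absurd (by simpa using hdsum) (h d1 h1)
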